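/- Fix integers n ≥ 1 and m ≥ 1, let I = (Fin m → Fin n) index the computational basis of the encoded one-hot space, and set D = n^m. For a tuple σ : Fin m → Equiv.Perm (Fin n), let Π_σ : Equiv.Perm I be the blockwise permutation x ↦ (fun b => σ b (x b)) and P_σ : Matrix I I ℂ its permutation matrix ((P_σ) x y = 1 if x = Π_σ y, else 0). Then for every matrix U in the unitary group of Matrix I I ℂ and every x* : I, the average over all (n!)^m tuples σ satisfies (1/(n!)^m) • Σ_σ Uᴴ · P_σ · E_{x* x*} · (P_σ)ᴴ · U = (1/D) • 1, where E_{x* x*} is the standard basis matrix with a single 1 in position (x*, x*) and 1 is the identity matrix on ℂ^I. -/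

import Mathlib

open Matrix

/-- Blockwise permutation twirl (operator form): averaging the conjugated rank-one
basis projector over independent per-block permutations, sandwiched between `Uᴴ`
and `U` for any unitary `U`, gives the maximally mixed operator `(1/D) • 1` with
`D = n^m`. -/
theorem blockwise_permutation_twirl_operator (n m : ℕ) (hn : 1 ≤ n) (hm : 1 ≤ m)
    (P : (Fin m → Equiv.Perm (Fin n)) →
      Matrix (Fin m → Fin n) (Fin m → Fin n) ℂ)
    (hP : ∀ σ x y, P σ x y = if x = (fun b => σ b (y b)) then 1 else 0)
    (U : Matrix.unitaryGroup (Fin m → Fin n) ℂ) (xstar : Fin m → Fin n) :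
    (((n.factorial : ℂ)) ^ m)⁻¹ • ∑ σ : Fin m → Equiv.Perm (Fin n),
        (U : Matrix (Fin m → Fin n) (Fin m → Fin n) ℂ)ᴴ * P σ *
          Matrix.single xstar xstar 1 * (P σ)ᴴ *
          (U : Matrix (Fin m → Fin n) (Fin m → Fin n) ℂ) =
      (((n : ℂ)) ^ m)⁻¹ • (1 : Matrix (Fin m → Fin n) (Fin m → Fin n) ℂ) := by
  classical
  set g : (Fin m → Equiv.Perm (Fin n)) → (Fin m → Fin n) :=
    fun σ => fun b => σ b (xstar b) with hg
  -- Step 1: conjugation by P σ moves the basis projector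
  have hstep1 : ∀ σ, P σ * Matrix.single xstar xstar (1:ℂ) * (P σ)ᴴ
      = Matrix.single (g σ) (g σ) 1 := by
    intro σ
    ext i j
    simp only [Matrix.mul_apply, Matrix.conjTranspose_apply, hP,
      Matrix.single, Matrix.of_apply, ite_and, mul_ite, mul_one, mul_zero,
      ite_mul, zero_mul, one_mul, apply_ite (star : ℂ → ℂ), star_one, star_zero,
      Finset.sum_ite_eq, Finset.sum_ite_eq', Finset.mem_univ, if_true]
    rw [Finset.sum_eq_single xstar]
    · by_cases hi : i = g σ <;> by_cases hj : j = g σ <;>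
        simp only [hg] at hi hj <;>
        simp [hi, hj, hg, eq_comm]
    · intro x _ hx; simp [Ne.symm hx]
    · simp
  -- counting: number of σ with g σ = x
  set N : (Fin m → Fin n) → ℕ := fun x =>
    (Finset.univ.filter (fun σ : Fin m → Equiv.Perm (Fin n) => g σ = x)).card with hN
  have hconst : ∀ x y : Fin m → Fin n, N x = N y := by
    intro x y
    apply Finset.card_bij'
      (fun σ _ => fun b => (Equiv.swap (x b) (y b)) * σ b)
      (fun σ _ => fun b => (Equiv.swap (x b) (y b)) * σ b)
    · intro σ hσ
      simp only [Finset.mem_filter, Finset.mem_univ, true_and] at hσ ⊢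
      funext b
      have hb := congrFun hσ b
      simp only [hg] at hb ⊢
      simp [Equiv.Perm.mul_apply, hb]
    · intro σ hσ
      simp only [Finset.mem_filter, Finset.mem_univ, true_and] at hσ ⊢
      funext b
      have hb := congrFun hσ b
      simp only [hg] at hb ⊢
      simp [Equiv.Perm.mul_apply, hb]
    · intro σ hσ
      funext b
      simp [← mul_assoc, Equiv.swap_mul_self, one_mul]
    · intro σ hσ
      funext b
      simp [← mul_assoc, Equiv.swap_mul_self, one_mul]
  have hsumN : ∑ x : Fin m → Fin n, N x = n.factorial ^ m := by
    have h := (Finset.card_eq_sum_card_fiberwise (f := g)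
      (s := (Finset.univ : Finset (Fin m → Equiv.Perm (Fin n))))
      (t := (Finset.univ : Finset (Fin m → Fin n))) (fun x _ => Finset.mem_univ _)).symm
    simp only [hN]
    rw [h, Finset.card_univ, Fintype.card_fun, Fintype.card_perm, Fintype.card_fin, Fintype.card_fin]
  have hcount : N xstar * n ^ m = n.factorial ^ m := by
    have h2 : ∑ x : Fin m → Fin n, N x = (Fintype.card (Fin m → Fin n)) * N xstar := by
      rw [Finset.sum_congr rfl (fun x _ => hconst x xstar), Finset.sum_const,
        Finset.card_univ, smul_eq_mul]
    rw [h2, Fintype.card_fun, Fintype.card_fin, Fintype.card_fin] at hsumN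
    rw [mul_comm]; exact hsumN
  -- sum of moved projectors
  have hstd : ∑ σ : Fin m → Equiv.Perm (Fin n), Matrix.single (g σ) (g σ) (1:ℂ)
      = (N xstar : ℂ) • 1 := by
    ext i j
    simp only [Matrix.sum_apply, Matrix.smul_apply, Matrix.one_apply,
      Matrix.single, Matrix.of_apply, smul_eq_mul]
    by_cases hij : i = j
    · subst hij
      simp only [and_self, eq_self_iff_true, if_true, mul_one]
      rw [Finset.sum_boole]
      exact_mod_cast hconst i xstar
    · rw [if_neg hij, mul_zero]
      apply Finset.sum_eq_zero
      intro σ _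
      rw [if_neg]
      rintro ⟨h1, h2⟩
      exact hij (h1.symm.trans h2)
  -- assemble
  have hrw : ∀ σ : Fin m → Equiv.Perm (Fin n),
      (U : Matrix (Fin m → Fin n) (Fin m → Fin n) ℂ)ᴴ * P σ *
        Matrix.single xstar xstar 1 * (P σ)ᴴ *
        (U : Matrix (Fin m → Fin n) (Fin m → Fin n) ℂ)
      = (U : Matrix (Fin m → Fin n) (Fin m → Fin n) ℂ)ᴴ *
          Matrix.single (g σ) (g σ) 1 *
          (U : Matrix (Fin m → Fin n) (Fin m → Fin n) ℂ) := by
    intro σ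
    rw [show (U : Matrix (Fin m → Fin n) (Fin m → Fin n) ℂ)ᴴ * P σ *
        Matrix.single xstar xstar 1 * (P σ)ᴴ *
        (U : Matrix (Fin m → Fin n) (Fin m → Fin n) ℂ)
      = (U : Matrix (Fin m → Fin n) (Fin m → Fin n) ℂ)ᴴ *
          (P σ * Matrix.single xstar xstar 1 * (P σ)ᴴ) *
          (U : Matrix (Fin m → Fin n) (Fin m → Fin n) ℂ) by simp only [Matrix.mul_assoc]]
    rw [hstep1]
  rw [Finset.sum_congr rfl (fun σ _ => hrw σ), ← Finset.sum_mul, ← Finset.mul_sum, hstd]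
  have hU : (U : Matrix (Fin m → Fin n) (Fin m → Fin n) ℂ)ᴴ *
      (U : Matrix (Fin m → Fin n) (Fin m → Fin n) ℂ) = 1 := by
    rw [← Matrix.star_eq_conjTranspose]
    exact Matrix.UnitaryGroup.star_mul_self U
  rw [mul_smul_comm, smul_mul_assoc, Matrix.mul_one, hU, smul_smul]
  congr 1
  have hc : (N xstar : ℂ) * (n : ℂ) ^ m = ((n.factorial : ℂ)) ^ m := by
    exact_mod_cast congrArg (Nat.cast : ℕ → ℂ) hcount
  have hn0 : ((n : ℂ)) ^ m ≠ 0 := pow_ne_zero _ (by exact_mod_cast Nat.one_le_iff_ne_zero.mp hn)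
  have hf0 : ((n.factorial : ℂ)) ^ m ≠ 0 := pow_ne_zero _ (by exact_mod_cast n.factorial_ne_zero)
  field_simp
  linear_combination hc
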